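/- The map y ↦ n!·exp[y₀,…,yₙ] on ℝ^{n+1} is symmetric and convex, hence Schur-convex; in particular if y majorizes z then n!·exp[y₀,…,yₙ] ≥ n!·exp[z₀,…,zₙ]. -/

import Mathlib

open MeasureTheory Real Filter Finset Asymptotics

/-- Divided difference of the exponential at nodes `x 0, …, x n`
(Hermite–Genocchi iterated-integral form, valid for repeated nodes). -/
noncomputable def expDD {n : ℕ} (x : Fin (n + 1) → ℝ) : ℝ :=
  ∫ t in {t : Fin n → ℝ | (∀ i, 0 ≤ t i ∧ t i ≤ 1) ∧ ∀ i j : Fin n, i ≤ j → t j ≤ t i},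
    Real.exp (x 0 + ∑ i : Fin n, t i * (x i.succ - x i.castSucc))

/-- Node tuple `a 0 ≤ … ≤ a (n-1)` followed by `x` with multiplicity `p+1`
and `y` with multiplicity `q+1`. -/
noncomputable def nodesPQ (n p q : ℕ) (a : Fin n → ℝ) (x y : ℝ) :
    Fin (n + (p + 1) + (q + 1)) → ℝ := fun i =>
  if h : (i : ℕ) < n then a ⟨i, h⟩ else if (i : ℕ) < n + (p + 1) then x else y

/-- `Kₙ(x,y) = exp[a₁,…,aₙ, x^(p+1), y^(q+1)]`. -/
noncomputable def Kn (n p q : ℕ) (a : Fin n → ℝ) (x y : ℝ) : ℝ :=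
  expDD (nodesPQ n p q a x y)

/-- Beta-weighted integral form of `exp[x^(p+1), y^(q+1)]`. -/
noncomputable def K0int (p q : ℕ) (x y : ℝ) : ℝ :=
  (1 / ((Nat.factorial p : ℝ) * (Nat.factorial q : ℝ))) *
    ∫ τ in (0:ℝ)..1, τ ^ p * (1 - τ) ^ q * Real.exp (τ * x + (1 - τ) * y)

/-- First divided difference of the exponential. -/
noncomputable def dd1 (x y : ℝ) : ℝ :=
  if x = y then Real.exp x else (Real.exp x - Real.exp y) / (x - y)

/-- `h(x,y) = eˣ + eʸ − 2·exp[x,y]`. -/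
noncomputable def hxy (x y : ℝ) : ℝ := Real.exp x + Real.exp y - 2 * dd1 x y

/-- `φ(u) = cosh u − sinh u / u`, with `φ(0)=0`. -/
noncomputable def phi (u : ℝ) : ℝ :=
  if u = 0 then 0 else Real.cosh u - Real.sinh u / u

/-- Lower incomplete gamma `γ(n,z) = ∫₀ᶻ t^(n-1) e^(−t) dt` (oriented integral). -/
noncomputable def lowerGamma (n : ℕ) (z : ℝ) : ℝ :=
  ∫ t in (0:ℝ)..z, t ^ (n - 1) * Real.exp (-t)

/-- Sum of the `k` largest coordinates of `y`. -/
noncomputable def topSum {m : ℕ} (k : ℕ) (y : Fin m → ℝ) : ℝ :=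
  sSup {t : ℝ | ∃ S : Finset (Fin m), S.card = k ∧ t = ∑ i ∈ S, y i}

/-- `e^{−t[x₀,…,x_m]}`: the divided difference of `s ↦ e^{−t s}` at the nodes `x`. -/
noncomputable def ddExpNeg (t : ℝ) {m : ℕ} (x : Fin (m + 1) → ℝ) : ℝ :=
  (-t) ^ m * expDD fun i => -t * x i

namespace Stmt15Aux

open MeasureTheory Real Finset

variable {n m : ℕ}

def TT (n : ℕ) : Set (Fin n → ℝ) := {t | (∀ i, 0 ≤ t i) ∧ ∑ i, t i ≤ 1}

def SS (n : ℕ) : Set (Fin n → ℝ) :=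
  {t | (∀ i, 0 ≤ t i ∧ t i ≤ 1) ∧ ∀ i j : Fin n, i ≤ j → t j ≤ t i}

lemma isClosed_TT : IsClosed (TT n) := by
  have h : TT n = (⋂ i, {t : Fin n → ℝ | 0 ≤ t i}) ∩ {t | ∑ i, t i ≤ 1} := by
    ext t; simp [TT, Set.mem_iInter]
  rw [h]
  exact (isClosed_iInter fun i => isClosed_le continuous_const (continuous_apply i)).inter
    (isClosed_le (continuous_finset_sum _ fun i _ => continuous_apply i) continuous_const)

lemma isClosed_SS : IsClosed (SS n) := by
  have h : SS n = (⋂ i, {t : Fin n → ℝ | 0 ≤ t i} ∩ {t | t i ≤ 1}) ∩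
      ⋂ i, ⋂ j, ⋂ (_ : i ≤ j), {t : Fin n → ℝ | t j ≤ t i} := by
    ext t; simp [SS, Set.mem_iInter, forall_and]
  rw [h]
  refine IsClosed.inter (isClosed_iInter fun i => ?_)
    (isClosed_iInter fun i => isClosed_iInter fun j => isClosed_iInter fun _ =>
      isClosed_le (continuous_apply j) (continuous_apply i))
  exact (isClosed_le continuous_const (continuous_apply i)).inter
    (isClosed_le (continuous_apply i) continuous_const)

lemma isCompact_TT : IsCompact (TT n) := by
  refine (isCompact_univ_pi fun _ : Fin n => isCompact_Icc (a := (0:ℝ)) (b := 1)).of_isClosed_subset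
    isClosed_TT ?_
  intro t ht
  intro i _
  refine ⟨ht.1 i, ?_⟩
  calc t i ≤ ∑ j, t j := Finset.single_le_sum (fun j _ => ht.1 j) (mem_univ i)
  _ ≤ 1 := ht.2

lemma isCompact_SS : IsCompact (SS n) := by
  refine (isCompact_univ_pi fun _ : Fin n => isCompact_Icc (a := (0:ℝ)) (b := 1)).of_isClosed_subset
    isClosed_SS ?_
  intro t ht i _
  exact ht.1 i

lemma integrableOn_TT {F : (Fin n → ℝ) → ℝ} (hF : Continuous F) :
    IntegrableOn (fun t => rexp (F t)) (TT n) :=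
  (Real.continuous_exp.comp hF).continuousOn.integrableOn_compact isCompact_TT

lemma integrableOn_SS {F : (Fin n → ℝ) → ℝ} (hF : Continuous F) :
    IntegrableOn (fun t => rexp (F t)) (SS n) :=
  (Real.continuous_exp.comp hF).continuousOn.integrableOn_compact isCompact_SS

lemma cov (A : Matrix (Fin n) (Fin n) ℝ) (hA : |A.det| = 1) (c : Fin n → ℝ)
    (T₁ : Set (Fin n → ℝ)) (h1 : MeasurableSet T₁)
    (hinj : Set.InjOn (fun t => c + A.mulVec t) T₁)
    (g : (Fin n → ℝ) → ℝ) :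
    ∫ t in (fun t => c + A.mulVec t) '' T₁, g t = ∫ t in T₁, g (c + A.mulVec t) := by
  have clm := LinearMap.toContinuousLinearMap (Matrix.toLin' A)
  rw [show (fun t => c + A.mulVec t) = (fun t => c + LinearMap.toContinuousLinearMap (Matrix.toLin' A) t) by
        funext t; simp [Matrix.toLin'_apply]] at hinj ⊢
  rw [integral_image_eq_integral_abs_det_fderiv_smul volume h1
      (fun x _ => (((LinearMap.toContinuousLinearMap (Matrix.toLin' A)).hasFDerivAt).const_add c).hasFDerivWithinAt)
      hinj g]
  simp only [ContinuousLinearMap.det, LinearMap.coe_toContinuousLinearMap, LinearMap.det_toLin', hA]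
  simp [Matrix.toLin'_apply]

def NA (n : ℕ) : Matrix (Fin n) (Fin n) ℝ := fun j k => if j ≤ k then 1 else 0

lemma NA_det : (NA n).det = 1 := by
  rw [Matrix.det_of_upperTriangular]
  · simp [NA]
  · intro i j h
    simp only [id] at h
    simp only [NA, if_neg (not_le.mpr h)]

lemma NA_mulVec (s : Fin n → ℝ) (j : Fin n) :
    (NA n).mulVec s j = ∑ k ∈ univ.filter (fun k => j ≤ k), s k := by
  simp [NA, Matrix.mulVec, dotProduct, ite_mul, Finset.sum_filter]

noncomputable def RA (k : Fin n) : Matrix (Fin n) (Fin n) ℝ :=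
  1 + Matrix.replicateCol Unit (Pi.single k 1 : Fin n → ℝ) *
    Matrix.replicateRow Unit (fun j => (-1 : ℝ) - if j = k then 1 else 0)

lemma RA_det (k : Fin n) : (RA k).det = -1 := by
  rw [RA, Matrix.det_one_add_replicateCol_mul_replicateRow]
  simp [dotProduct, Pi.single_apply]

lemma RA_mulVec (k : Fin n) (t : Fin n → ℝ) :
    (Pi.single k 1 : Fin n → ℝ) + (RA k).mulVec t
      = fun i => if i = k then 1 - ∑ j, t j else t i := by
  funext i
  simp only [Pi.add_apply, RA, Matrix.add_mulVec, Matrix.one_mulVec]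
  have h2 : (Matrix.replicateCol Unit (Pi.single k 1 : Fin n → ℝ) *
        Matrix.replicateRow Unit (fun j => (-1 : ℝ) - if j = k then 1 else 0)).mulVec t i
      = (Pi.single k 1 : Fin n → ℝ) i * ∑ j, ((-1 : ℝ) - if j = k then 1 else 0) * t j := by
    simp [Matrix.mulVec, dotProduct, Matrix.replicateCol, Matrix.replicateRow, Finset.mul_sum,
      Matrix.mul_apply, mul_assoc]
  rw [h2]
  rcases eq_or_ne i k with rfl | h
  · simp [sub_mul, Finset.sum_sub_distrib, Finset.sum_ite_eq', Pi.single_apply]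
    ring
  · simp [Pi.single_apply, h]

def PA (σ : Equiv.Perm (Fin n)) : Matrix (Fin n) (Fin n) ℝ := σ.permMatrix ℝ

lemma PA_det (σ : Equiv.Perm (Fin n)) : |(PA σ).det| = 1 := by
  rw [PA, Matrix.det_permutation]
  rcases Int.units_eq_one_or (Equiv.Perm.sign σ) with h | h <;> simp [h]

lemma PA_mulVec (σ : Equiv.Perm (Fin n)) (t : Fin n → ℝ) :
    (PA σ).mulVec t = fun i => t (σ i) := by
  funext i
  simp [PA, Matrix.mulVec, dotProduct, Equiv.Perm.permMatrix,
    Equiv.toPEquiv_apply, ite_mul]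

lemma sum_Ico_telescope (u : ℕ → ℝ) {a n : ℕ} (h : a ≤ n) :
    ∑ m ∈ Finset.Ico a n, (u m - u (m+1)) = u a - u n := by
  rw [Finset.sum_Ico_eq_sum_range]
  have h2 : ∀ i, u (a + (i+1)) = u ((a + i) + 1) := fun i => by rw [add_assoc]
  calc ∑ i ∈ Finset.range (n - a), (u (a + i) - u (a + i + 1))
      = (fun i => u (a+i)) 0 - (fun i => u (a+i)) (n-a) :=
        Finset.sum_range_sub' (fun i => u (a + i)) (n - a)
  _ = u a - u n := by simp; congr 1; omega

lemma filter_le_fin_sum (k : Fin n) (f : ℕ → ℝ) :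
    ∑ j ∈ univ.filter (fun j : Fin n => j ≤ k), f (j : ℕ)
      = ∑ m ∈ Finset.range ((k:ℕ)+1), f m := by
  refine Finset.sum_bij' (fun j _ => (j : ℕ)) (fun m hm => ⟨m, ?_⟩) ?_ ?_ ?_ ?_ ?_
  · have := Finset.mem_range.1 hm; omega
  · intro a ha; simp only [Finset.mem_filter, Fin.le_def] at ha
    simp only [Finset.mem_range]; omega
  · intro m hm; have := Finset.mem_range.1 hm
    simp only [Finset.mem_filter, Fin.le_def]
    exact ⟨Finset.mem_univ _, by simpa using Nat.lt_succ_iff.mp this⟩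
  · intro a ha; exact Fin.ext rfl
  · intro m hm; rfl
  · intro a ha; rfl

lemma filter_ge_fin_sum (j : Fin n) (f : ℕ → ℝ) :
    ∑ k ∈ univ.filter (fun k : Fin n => j ≤ k), f (k : ℕ)
      = ∑ m ∈ Finset.Ico (j:ℕ) n, f m := by
  refine Finset.sum_bij' (fun k _ => (k : ℕ)) (fun m hm => ⟨m, ?_⟩) ?_ ?_ ?_ ?_ ?_
  · exact (Finset.mem_Ico.1 hm).2
  · intro a ha; simp only [Finset.mem_filter, Fin.le_def] at ha
    simp only [Finset.mem_Ico]; exact ⟨ha.2, a.isLt⟩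
  · intro m hm
    simp only [Finset.mem_filter, Fin.le_def]
    exact ⟨Finset.mem_univ _, (Finset.mem_Ico.1 hm).1⟩
  · intro a ha; exact Fin.ext rfl
  · intro m hm; rfl
  · intro a ha; rfl

noncomputable def wt (t : Fin n → ℝ) : Fin (n+1) → ℝ := Fin.cases (1 - ∑ i, t i) t

noncomputable def B (y : Fin (n+1) → ℝ) : ℝ := ∫ t in TT n, rexp (∑ i, wt t i * y i)

lemma wt_zero (t : Fin n → ℝ) : wt t 0 = 1 - ∑ i, t i := rfl

lemma wt_succ (t : Fin n → ℝ) (i : Fin n) : wt t i.succ = t i := by simp [wt]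

lemma sum_wt_mul (t : Fin n → ℝ) (y : Fin (n+1) → ℝ) :
    ∑ i, wt t i * y i = (1 - ∑ i, t i) * y 0 + ∑ i : Fin n, t i * y i.succ := by
  rw [Fin.sum_univ_succ]
  simp [wt_zero, wt_succ]

lemma NA_image : (fun s => (0 : Fin n → ℝ) + (NA n).mulVec s) '' TT n = SS n := by
  apply Set.Subset.antisymm
  · rintro _ ⟨s, hs, rfl⟩
    simp only [zero_add]
    refine ⟨fun j => ⟨?_, ?_⟩, fun i j hij => ?_⟩
    · rw [NA_mulVec]
      exact Finset.sum_nonneg fun k _ => hs.1 k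
    · rw [NA_mulVec]
      calc ∑ k ∈ univ.filter (fun k => j ≤ k), s k ≤ ∑ k, s k :=
            Finset.sum_le_sum_of_subset_of_nonneg (Finset.filter_subset _ _)
              (fun k _ _ => hs.1 k)
        _ ≤ 1 := hs.2
    · rw [NA_mulVec, NA_mulVec]
      apply Finset.sum_le_sum_of_subset_of_nonneg
      · intro k hk
        simp only [Finset.mem_filter] at hk ⊢
        exact ⟨hk.1, le_trans hij hk.2⟩
      · exact fun k _ _ => hs.1 k
  · intro t ht
    set u : ℕ → ℝ := fun m => if h : m < n then t ⟨m, h⟩ else 0 with hu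
    have hut : ∀ j : Fin n, u (j : ℕ) = t j := by
      intro j; simp [hu, j.isLt]
    refine ⟨fun k => u (k : ℕ) - u ((k:ℕ)+1), ⟨?_, ?_⟩, ?_⟩
    · intro k
      show (0:ℝ) ≤ u (k:ℕ) - u ((k:ℕ)+1)
      rw [hut k]
      simp only [hu]
      split_ifs with h
      · have : t ⟨(k:ℕ)+1, h⟩ ≤ t k := ht.2 k ⟨(k:ℕ)+1, h⟩ (by simp [Fin.le_def])
        linarith
      · have := (ht.1 k).1; linarith
    · have : ∑ k : Fin n, (u (k:ℕ) - u ((k:ℕ)+1)) = ∑ m ∈ Finset.range n, (u m - u (m+1)) :=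
        Fin.sum_univ_eq_sum_range (fun m => u m - u (m+1)) n
      rw [this, Finset.sum_range_sub' u n]
      have hn : u n = 0 := by simp [hu]
      rw [hn, sub_zero]
      show (if h : 0 < n then t ⟨0, h⟩ else 0) ≤ 1
      split_ifs with h
      · exact (ht.1 _).2
      · norm_num
    · funext j
      simp only [zero_add]
      rw [NA_mulVec]
      rw [filter_ge_fin_sum j (fun m => u m - u (m+1)), sum_Ico_telescope u (le_of_lt j.isLt)]
      simp [hu, j.isLt]

lemma NA_exponent (y : Fin (n+1) → ℝ) (s : Fin n → ℝ) :
    y 0 + ∑ j : Fin n, ((NA n).mulVec s) j * (y j.succ - y j.castSucc)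
      = ∑ i, wt s i * y i := by
  set v : ℕ → ℝ := fun m => if h : m < n+1 then y ⟨m, h⟩ else 0 with hv
  have hsucc : ∀ j : Fin n, y j.succ = v ((j:ℕ)+1) := by
    intro j
    have h : (j:ℕ)+1 < n+1 := by omega
    simp only [hv, dif_pos h]
    congr 1
  have hcast : ∀ j : Fin n, y j.castSucc = v (j:ℕ) := by
    intro j
    have h : (j:ℕ) < n+1 := by omega
    simp only [hv, dif_pos h]
    congr 1
  have key : ∀ k : Fin n, ∑ j ∈ univ.filter (fun j : Fin n => j ≤ k),
      (y j.succ - y j.castSucc) = y k.succ - y 0 := by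
    intro k
    have h1 : ∑ j ∈ univ.filter (fun j : Fin n => j ≤ k), (y j.succ - y j.castSucc)
        = ∑ j ∈ univ.filter (fun j : Fin n => j ≤ k), (v ((j:ℕ)+1) - v (j:ℕ)) := by
      apply Finset.sum_congr rfl
      intro j _; rw [hsucc j, hcast j]
    rw [h1, filter_le_fin_sum k (fun m => v (m+1) - v m), Finset.sum_range_sub v ((k:ℕ)+1)]
    rw [← hsucc k]
    have h0 : v 0 = y 0 := by
      simp only [hv]
      rw [dif_pos (by omega : (0:ℕ) < n+1)]
      rfl
    rw [h0]
  have swap : ∑ j : Fin n, ((NA n).mulVec s) j * (y j.succ - y j.castSucc)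
      = ∑ k : Fin n, s k * (y k.succ - y 0) := by
    have h1 : ∀ j : Fin n, ((NA n).mulVec s) j * (y j.succ - y j.castSucc)
        = ∑ k : Fin n, (if j ≤ k then s k * (y j.succ - y j.castSucc) else 0) := by
      intro j
      rw [NA_mulVec, Finset.sum_mul, Finset.sum_filter]
    rw [Finset.sum_congr rfl fun j _ => h1 j, Finset.sum_comm]
    apply Finset.sum_congr rfl
    intro k _
    rw [← Finset.sum_filter, ← Finset.mul_sum, key k]
  rw [swap, sum_wt_mul]
  have : ∑ k : Fin n, s k * (y k.succ - y 0)
      = ∑ k : Fin n, s k * y k.succ - (∑ k : Fin n, s k) * y 0 := by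
    rw [Finset.sum_mul]
    rw [← Finset.sum_sub_distrib]
    apply Finset.sum_congr rfl
    intro k _; ring
  rw [this]; ring

lemma expDD_eq_B (y : Fin (n+1) → ℝ) : expDD y = B y := by
  have hinj : Set.InjOn (fun t => (0 : Fin n → ℝ) + (NA n).mulVec t) (TT n) := by
    have : Function.Injective ((NA n).mulVec) := by
      rw [Matrix.mulVec_injective_iff_isUnit, Matrix.isUnit_iff_isUnit_det, NA_det]
      exact isUnit_one
    intro a _ b _ hab
    simp only [zero_add] at hab
    exact this hab
  have h := cov (NA n) (by rw [NA_det]; norm_num) 0 (TT n) isClosed_TT.measurableSet hinj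
    (fun t => Real.exp (y 0 + ∑ i : Fin n, t i * (y i.succ - y i.castSucc)))
  rw [NA_image] at h
  show (∫ t in SS n, Real.exp (y 0 + ∑ i : Fin n, t i * (y i.succ - y i.castSucc))) = B y
  rw [h]
  unfold B
  apply setIntegral_congr_fun isClosed_TT.measurableSet
  intro s _
  simp only [zero_add]
  rw [← NA_exponent y s]

/-- the reflection map -/

noncomputable def rf (k : Fin n) (t : Fin n → ℝ) : Fin n → ℝ :=
  fun i => if i = k then 1 - ∑ j, t j else t i

lemma rf_apply_self (k : Fin n) (t : Fin n → ℝ) : rf k t k = 1 - ∑ j, t j := if_pos rfl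

lemma rf_apply_ne {i k : Fin n} (h : i ≠ k) (t : Fin n → ℝ) : rf k t i = t i := if_neg h

lemma rf_sum (k : Fin n) (t : Fin n → ℝ) : ∑ i, rf k t i = 1 - t k := by
  have h1 : rf k t = Function.update t k (1 - ∑ j, t j) := by
    funext i; simp [rf, Function.update_apply]
  rw [h1, Finset.sum_update_of_mem (Finset.mem_univ k)]
  have h2 : ∑ x ∈ Finset.univ \ {k}, t x = (∑ x, t x) - t k := by
    rw [Finset.sdiff_singleton_eq_erase, Finset.sum_erase_eq_sub (Finset.mem_univ k)]
  rw [h2]; ring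

lemma rf_invol (k : Fin n) (t : Fin n → ℝ) : rf k (rf k t) = t := by
  funext i
  rcases eq_or_ne i k with rfl | h
  · rw [rf_apply_self, rf_sum]; ring
  · rw [rf_apply_ne h, rf_apply_ne h]

lemma rf_mem (k : Fin n) {t : Fin n → ℝ} (ht : t ∈ TT n) : rf k t ∈ TT n := by
  constructor
  · intro i
    rcases eq_or_ne i k with rfl | h
    · rw [rf_apply_self]; linarith [ht.2]
    · rw [rf_apply_ne h]; exact ht.1 i
  · rw [rf_sum]; linarith [ht.1 k]

lemma rf_image (k : Fin n) : rf k '' TT n = TT n := by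
  apply Set.Subset.antisymm
  · rintro _ ⟨t, ht, rfl⟩; exact rf_mem k ht
  · intro t ht
    exact ⟨rf k t, rf_mem k ht, rf_invol k t⟩

lemma sum_wt_y_swap0 (k : Fin n) (y : Fin (n+1) → ℝ) (t : Fin n → ℝ) :
    ∑ i, wt (rf k t) i * y i = ∑ i, wt t i * y (Equiv.swap 0 k.succ i) := by
  set σ := Equiv.swap (0 : Fin (n+1)) k.succ with hσ
  have claim : ∀ i, wt (rf k t) i = wt t (σ i) := by
    intro i
    induction i using Fin.cases with
    | zero =>
      rw [wt_zero, rf_sum, hσ, Equiv.swap_apply_left, wt_succ]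
      ring
    | succ m =>
      rw [wt_succ]
      rcases eq_or_ne m k with rfl | h
      · rw [hσ, Equiv.swap_apply_right, wt_zero]
        simp [rf]
      · have h1 : σ m.succ = m.succ :=
          Equiv.swap_apply_of_ne_of_ne (Fin.succ_ne_zero m) (fun hc => h (Fin.succ_injective n hc))
        rw [h1, wt_succ]
        simp [rf, h]
  calc ∑ i, wt (rf k t) i * y i = ∑ i, wt t (σ i) * y i := by
        apply Finset.sum_congr rfl; intro i _; rw [claim i]
  _ = ∑ i, wt t i * y (σ i) := by
      have := Equiv.sum_comp σ (fun j => wt t j * y (σ j))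
      rw [← this]
      apply Finset.sum_congr rfl
      intro i _
      rw [hσ, Equiv.swap_apply_self]

lemma B_swap0 (k : Fin n) (y : Fin (n+1) → ℝ) :
    B (y ∘ Equiv.swap 0 k.succ) = B y := by
  have hmap : (fun t => (Pi.single k 1 : Fin n → ℝ) + (RA k).mulVec t) = rf k := by
    funext t; rw [RA_mulVec]; rfl
  have hinj : Set.InjOn (fun t => (Pi.single k 1 : Fin n → ℝ) + (RA k).mulVec t) (TT n) := by
    rw [hmap]
    intro a _ b _ hab
    have := congrArg (rf k) hab
    rwa [rf_invol, rf_invol] at this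
  have h := cov (RA k) (by rw [RA_det]; norm_num) (Pi.single k 1) (TT n)
    isClosed_TT.measurableSet hinj (fun t => rexp (∑ i, wt t i * y i))
  rw [hmap, rf_image] at h
  show B (fun i => y (Equiv.swap 0 k.succ i)) = B y
  unfold B
  rw [h]
  apply setIntegral_congr_fun isClosed_TT.measurableSet
  intro t _
  have hpt : (Pi.single k 1 : Fin n → ℝ) + (RA k).mulVec t = rf k t := congrFun hmap t
  dsimp only
  rw [hpt]
  rw [show (∑ i, wt t i * (fun i => y (Equiv.swap 0 k.succ i)) i)
      = ∑ i, wt t i * y (Equiv.swap 0 k.succ i) from rfl, ← sum_wt_y_swap0 k y t]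

lemma perm_image (τ : Equiv.Perm (Fin n)) : (fun t : Fin n → ℝ => t ∘ τ) '' TT n = TT n := by
  have key : ∀ (σ : Equiv.Perm (Fin n)) (t : Fin n → ℝ), t ∈ TT n → t ∘ σ ∈ TT n := by
    intro σ t ht
    refine ⟨fun i => ht.1 _, ?_⟩
    rw [show ∑ i, (t ∘ σ) i = ∑ i, t i from Equiv.sum_comp σ t]
    exact ht.2
  apply Set.Subset.antisymm
  · rintro _ ⟨t, ht, rfl⟩; exact key τ t ht
  · intro t ht
    refine ⟨t ∘ τ.symm, key τ.symm t ht, ?_⟩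
    funext i; simp

lemma sum_wt_y_swap_succ (i j : Fin n) (y : Fin (n+1) → ℝ) (t : Fin n → ℝ) :
    ∑ l, wt (t ∘ Equiv.swap i j) l * y l = ∑ l, wt t l * y (Equiv.swap i.succ j.succ l) := by
  set σ := Equiv.swap i.succ j.succ with hσ
  have claim : ∀ l, wt (t ∘ Equiv.swap i j) l = wt t (σ l) := by
    intro l
    induction l using Fin.cases with
    | zero =>
      have h0 : σ 0 = 0 :=
        Equiv.swap_apply_of_ne_of_ne (Fin.succ_ne_zero i).symm (Fin.succ_ne_zero j).symm
      rw [h0, wt_zero, wt_zero, show ∑ l, (t ∘ Equiv.swap i j) l = ∑ l, t l from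
        Equiv.sum_comp _ t]
    | succ m =>
      rw [wt_succ]
      have h1 : σ m.succ = (Equiv.swap i j m).succ := by
        rw [hσ, Function.Injective.swap_apply (Fin.succ_injective n)]
      rw [h1, wt_succ]
      rfl
  calc ∑ l, wt (t ∘ Equiv.swap i j) l * y l = ∑ l, wt t (σ l) * y l := by
        apply Finset.sum_congr rfl; intro l _; rw [claim l]
  _ = ∑ l, wt t l * y (σ l) := by
      have := Equiv.sum_comp σ (fun l => wt t l * y (σ l))
      rw [← this]
      apply Finset.sum_congr rfl
      intro l _
      rw [hσ, Equiv.swap_apply_self]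

lemma B_swap_succ (i j : Fin n) (y : Fin (n+1) → ℝ) :
    B (y ∘ Equiv.swap i.succ j.succ) = B y := by
  set τ := Equiv.swap i j with hτ
  have hmap : (fun t : Fin n → ℝ => (0 : Fin n → ℝ) + (PA τ).mulVec t) = (fun t => t ∘ τ) := by
    funext t; rw [zero_add, PA_mulVec]; rfl
  have hinj : Set.InjOn (fun t : Fin n → ℝ => (0 : Fin n → ℝ) + (PA τ).mulVec t) (TT n) := by
    rw [hmap]
    intro a _ b _ hab
    funext l
    have := congrFun hab (τ.symm l)
    simpa using this
  have h := cov (PA τ) (PA_det τ) 0 (TT n) isClosed_TT.measurableSet hinj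
    (fun t => rexp (∑ l, wt t l * y l))
  rw [hmap, perm_image] at h
  show B (fun l => y (Equiv.swap i.succ j.succ l)) = B y
  unfold B
  rw [h]
  apply setIntegral_congr_fun isClosed_TT.measurableSet
  intro t _
  have hpt : (0 : Fin n → ℝ) + (PA τ).mulVec t = t ∘ τ := congrFun hmap t
  dsimp only
  rw [hpt]
  rw [show (∑ l, wt t l * (fun l => y (Equiv.swap i.succ j.succ l)) l)
      = ∑ l, wt t l * y (Equiv.swap i.succ j.succ l) from rfl, ← sum_wt_y_swap_succ i j y t]

lemma B_swap (a b : Fin (n+1)) (y : Fin (n+1) → ℝ) :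
    B (y ∘ Equiv.swap a b) = B y := by
  rcases eq_or_ne a b with rfl | hab
  · simp [Equiv.swap_self]
  induction a using Fin.cases with
  | zero =>
    induction b using Fin.cases with
    | zero => exact absurd rfl hab
    | succ k => exact B_swap0 k y
  | succ i =>
    induction b using Fin.cases with
    | zero => rw [Equiv.swap_comm]; exact B_swap0 i y
    | succ j => exact B_swap_succ i j y

lemma B_perm (e : Equiv.Perm (Fin (n+1))) : ∀ y : Fin (n+1) → ℝ,
    B (y ∘ e) = B y := by
  refine Equiv.Perm.swap_induction_on e ?_ ?_
  · intro y
    show B (y ∘ ⇑(1 : Equiv.Perm (Fin (n+1)))) = B y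
    congr
  · intro f x x' hxx' ih y
    have hcomp : y ∘ ⇑(Equiv.swap x x' * f) = (y ∘ ⇑(Equiv.swap x x')) ∘ ⇑f := by
      funext i; rfl
    rw [hcomp, ih (y ∘ ⇑(Equiv.swap x x')), B_swap]

def EE (t : Fin n → ℝ) (y : Fin (n+1) → ℝ) : ℝ :=
  y 0 + ∑ i : Fin n, t i * (y i.succ - y i.castSucc)

lemma expDD_eq_SS (y : Fin (n+1) → ℝ) : expDD y = ∫ t in SS n, rexp (EE t y) := rfl

lemma contEE (y : Fin (n+1) → ℝ) : Continuous fun t : Fin n → ℝ => EE t y := by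
  apply Continuous.add continuous_const
  exact continuous_finset_sum _ fun i _ => (continuous_apply i).mul continuous_const

lemma integrableOn_expEE (y : Fin (n+1) → ℝ) :
    IntegrableOn (fun t => rexp (EE t y)) (SS n) :=
  (Real.continuous_exp.comp (contEE y)).continuousOn.integrableOn_compact isCompact_SS

lemma expDD_convexOn :
    ConvexOn ℝ Set.univ (fun y : Fin (n + 1) → ℝ => (n.factorial : ℝ) * expDD y) := by
  have h : ConvexOn ℝ Set.univ (fun y : Fin (n+1) → ℝ => expDD y) := by
    refine ⟨convex_univ, ?_⟩
    intro y _ z _ a b ha hb hab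
    dsimp only
    have hE : ∀ t : Fin n → ℝ, EE t (a • y + b • z) = a * EE t y + b * EE t z := by
      intro t
      simp only [EE, Pi.add_apply, Pi.smul_apply, smul_eq_mul]
      rw [show ∑ i : Fin n, t i * (a * y i.succ + b * z i.succ - (a * y i.castSucc + b * z i.castSucc))
          = ∑ i : Fin n, (a * (t i * (y i.succ - y i.castSucc)) + b * (t i * (z i.succ - z i.castSucc)))
        from Finset.sum_congr rfl fun i _ => by ring]
      rw [Finset.sum_add_distrib, ← Finset.mul_sum, ← Finset.mul_sum]
      ring
    rw [expDD_eq_SS, expDD_eq_SS, expDD_eq_SS, smul_eq_mul, smul_eq_mul]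
    have step1 : ∫ t in SS n, rexp (EE t (a • y + b • z))
        ≤ ∫ t in SS n, (a * rexp (EE t y) + b * rexp (EE t z)) := by
      apply setIntegral_mono_on (integrableOn_expEE _)
        (((integrableOn_expEE y).const_mul a).add ((integrableOn_expEE z).const_mul b))
        isClosed_SS.measurableSet
      intro t _
      rw [hE t]
      have := convexOn_exp.2 (Set.mem_univ (EE t y)) (Set.mem_univ (EE t z)) ha hb hab
      simpa using this
    have step2 : ∫ t in SS n, (a * rexp (EE t y) + b * rexp (EE t z))
        = a * (∫ t in SS n, rexp (EE t y)) + b * ∫ t in SS n, rexp (EE t z) := by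
      rw [integral_add ((integrableOn_expEE y).const_mul a) ((integrableOn_expEE z).const_mul b),
        MeasureTheory.integral_const_mul, MeasureTheory.integral_const_mul]
    linarith
  have h2 := h.smul (by positivity : (0:ℝ) ≤ (n.factorial : ℝ))
  simpa [smul_eq_mul] using h2

lemma topSum_set_finite (k : ℕ) (y : Fin m → ℝ) :
    {t : ℝ | ∃ S : Finset (Fin m), S.card = k ∧ t = ∑ i ∈ S, y i}.Finite := by
  apply Set.Finite.subset (Set.finite_range (fun S : Finset (Fin m) => ∑ i ∈ S, y i))
  rintro t ⟨S, _, rfl⟩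
  exact ⟨S, rfl⟩

lemma le_topSum {k : ℕ} (y : Fin m → ℝ) {S : Finset (Fin m)} (hS : S.card = k) :
    ∑ i ∈ S, y i ≤ topSum k y :=
  le_csSup (topSum_set_finite k y).bddAbove ⟨S, hS, rfl⟩

lemma topSum_le {k : ℕ} (hk : k ≤ m) (y : Fin m → ℝ) {a : ℝ}
    (h : ∀ S : Finset (Fin m), S.card = k → ∑ i ∈ S, y i ≤ a) : topSum k y ≤ a := by
  apply csSup_le
  · obtain ⟨S, _, hcard⟩ := Finset.exists_subset_card_eq (s := (Finset.univ : Finset (Fin m))) (n := k)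
      (by simpa using hk)
    exact ⟨∑ i ∈ S, y i, S, hcard, rfl⟩
  · rintro t ⟨S, hS, rfl⟩
    exact h S hS

lemma fin_strictMono_le' {k : ℕ} (g : Fin k → ℕ) (hg : StrictMono g) :
    ∀ (jv : ℕ) (hj : jv < k), jv ≤ g ⟨jv, hj⟩ := by
  intro jv
  induction jv with
  | zero => exact fun _ => Nat.zero_le _
  | succ p ih =>
    intro hj
    have hp : p < k := by omega
    have h1 := ih hp
    have h2 : g ⟨p, hp⟩ < g ⟨p+1, hj⟩ := hg (by simp [Fin.lt_def])
    omega

lemma fin_strictMono_le {k : ℕ} (g : Fin k → ℕ) (hg : StrictMono g) (j : Fin k) : (j:ℕ) ≤ g j := by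
  have := fin_strictMono_le' g hg (j:ℕ) j.isLt
  simpa using this

/-- sum over filter of small indices equals sum over `Fin k` -/

lemma sum_filter_lt_eq {k : ℕ} (hk : k ≤ m) (w : Fin m → ℝ) :
    ∑ i ∈ univ.filter (fun i : Fin m => (i:ℕ) < k), w i
      = ∑ j : Fin k, w ⟨(j:ℕ), lt_of_lt_of_le j.isLt hk⟩ := by
  refine (Finset.sum_bij' (fun (j : Fin k) _ => (⟨(j:ℕ), lt_of_lt_of_le j.isLt hk⟩ : Fin m))
    (fun i hi => ⟨(i:ℕ), by simpa using (Finset.mem_filter.1 hi).2⟩) ?_ ?_ ?_ ?_ ?_).symm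
  · intro j _; simp [Finset.mem_filter]
  · intro i hi; exact Finset.mem_univ _
  · intro j _; rfl
  · intro i hi; rfl
  · intro j _; rfl

lemma sum_subset_le_sorted (w : Fin m → ℝ) (hw : Antitone w) (S : Finset (Fin m)) :
    ∑ i ∈ S, w i ≤ ∑ i ∈ univ.filter (fun i : Fin m => (i:ℕ) < S.card), w i := by
  set k := S.card with hk
  have hkm : k ≤ m := by
    have := Finset.card_le_card (Finset.subset_univ S)
    simpa using this
  have emb := S.orderEmbOfFin hk.symm
  have hsum : ∑ i ∈ S, w i = ∑ j : Fin k, w (S.orderEmbOfFin hk.symm j) := by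
    refine (Finset.sum_bij (fun (j : Fin k) _ => S.orderEmbOfFin hk.symm j) ?_ ?_ ?_ ?_).symm
    · intro j _; exact Finset.orderEmbOfFin_mem S hk.symm j
    · intro a _ b _ hab; exact (S.orderEmbOfFin hk.symm).injective hab
    · intro b hb
      have : b ∈ Set.range (S.orderEmbOfFin hk.symm) := by
        rw [Finset.range_orderEmbOfFin]; exact hb
      obtain ⟨j, hj⟩ := this
      exact ⟨j, Finset.mem_univ _, hj⟩
    · intro j _; rfl
  rw [hsum, sum_filter_lt_eq hkm w]
  apply Finset.sum_le_sum
  intro j _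
  apply hw
  rw [Fin.le_def]
  exact fin_strictMono_le (fun j => ((S.orderEmbOfFin hk.symm j : Fin m) : ℕ))
    (fun a b hab => by
      have := (S.orderEmbOfFin hk.symm).strictMono hab
      exact this) j

lemma filter_lt_succ_insert {k : ℕ} (hk : k < m) :
    univ.filter (fun i : Fin m => (i:ℕ) < k+1)
      = insert ⟨k, hk⟩ (univ.filter (fun i : Fin m => (i:ℕ) < k)) := by
  ext i
  simp only [Finset.mem_filter, Finset.mem_insert, Finset.mem_univ, true_and, Fin.ext_iff]
  omega

lemma abel_le (c d : Fin m → ℝ) (hc : Antitone c)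
    (hD : ∀ k : ℕ, k < m → ∑ i ∈ univ.filter (fun i : Fin m => (i:ℕ) < k+1), d i ≤ 0)
    (hDm : ∑ i, d i = 0) :
    ∑ i, c i * d i ≤ 0 := by
  rcases Nat.eq_zero_or_pos m with rfl | hm
  · simp
  have claim : ∀ (k : ℕ) (hk : k < m),
      ∑ i ∈ univ.filter (fun i : Fin m => (i:ℕ) < k+1), c i * d i
        ≤ c ⟨k, hk⟩ * ∑ i ∈ univ.filter (fun i : Fin m => (i:ℕ) < k+1), d i := by
    intro k
    induction k with
    | zero =>
      intro hk
      rw [filter_lt_succ_insert hk]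
      have h0 : univ.filter (fun i : Fin m => (i:ℕ) < 0) = ∅ := by
        apply Finset.filter_false_of_mem; intro i _; omega
      rw [h0]
      simp
    | succ p ih =>
      intro hk
      have hp : p < m := by omega
      have hnotmem : (⟨p+1, hk⟩ : Fin m) ∉ univ.filter (fun i : Fin m => (i:ℕ) < p+1) := by
        simp
      rw [filter_lt_succ_insert hk, Finset.sum_insert hnotmem, Finset.sum_insert hnotmem]
      have h1 := ih hp
      have h2 : c ⟨p, hp⟩ * ∑ i ∈ univ.filter (fun i : Fin m => (i:ℕ) < p+1), d i
          ≤ c ⟨p+1, hk⟩ * ∑ i ∈ univ.filter (fun i : Fin m => (i:ℕ) < p+1), d i := by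
        apply mul_le_mul_of_nonpos_right _ (hD p hp)
        apply hc
        rw [Fin.le_def]
        simp only [Fin.val_mk]
        omega
      nlinarith [h1, h2]
  have hfull : univ.filter (fun i : Fin m => (i:ℕ) < (m-1)+1) = (univ : Finset (Fin m)) := by
    apply Finset.filter_true_of_mem
    intro i _
    have := i.isLt; omega
  have hlast : (m - 1) < m := by omega
  have := claim (m-1) hlast
  rw [hfull, hDm, mul_zero] at this
  exact this

lemma antitone_sort_neg (w : Fin m → ℝ) :
    Antitone (fun i => w (Tuple.sort (fun i => -w i) i)) := by
  intro a b hab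
  have := Tuple.monotone_sort (fun i => -w i) hab
  simp only [Function.comp_apply] at this
  linarith

lemma card_filter_lt {k : ℕ} (hk : k ≤ m) :
    (univ.filter (fun i : Fin m => (i:ℕ) < k)).card = k := by
  have h := sum_filter_lt_eq hk (fun _ => (1:ℝ))
  simp only [Finset.sum_const, nsmul_eq_mul, mul_one, Finset.card_univ, Fintype.card_fin] at h
  exact_mod_cast h

lemma key_ineq (y z : Fin m → ℝ) (hsum : ∑ i, z i = ∑ i, y i)
    (hts : ∀ k, topSum k z ≤ topSum k y) (c : Fin m → ℝ) :
    ∃ σ : Equiv.Perm (Fin m), ∑ i, c i * z i ≤ ∑ i, c i * y (σ i) := by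
  set τ := Tuple.sort (fun i => -c i) with hτ
  set ρz := Tuple.sort (fun i => -z i) with hρz
  set ρy := Tuple.sort (fun i => -y i) with hρy
  have hc' : Antitone (fun i => c (τ i)) := antitone_sort_neg c
  have hz' : Antitone (fun i => z (ρz i)) := antitone_sort_neg z
  have hy' : Antitone (fun i => y (ρy i)) := antitone_sort_neg y
  refine ⟨τ.symm.trans ρy, ?_⟩
  have h1 : ∑ i, c i * z i = ∑ i, c (τ i) * z (τ i) :=
    (Equiv.sum_comp τ (fun i => c i * z i)).symm
  have h2 : ∑ i, c (τ i) * z (τ i) ≤ ∑ i, c (τ i) * z (ρz i) := by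
    have hmono : Monovary (fun i => c (τ i)) (fun i => z (ρz i)) := by
      intro i j hij
      rcases le_or_gt i j with h | h
      · exfalso; exact absurd (hz' h) (not_le.mpr hij)
      · exact hc' h.le
    have := hmono.sum_mul_comp_perm_le_sum_mul (σ := τ.trans ρz.symm)
    simpa only [Equiv.trans_apply, Equiv.apply_symm_apply] using this
  have h3 : ∑ i, c (τ i) * z (ρz i) ≤ ∑ i, c (τ i) * y (ρy i) := by
    have habel := abel_le (fun i => c (τ i)) (fun i => z (ρz i) - y (ρy i)) hc' ?_ ?_
    · have hexp : ∑ i, c (τ i) * (z (ρz i) - y (ρy i))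
          = ∑ i, c (τ i) * z (ρz i) - ∑ i, c (τ i) * y (ρy i) := by
        rw [← Finset.sum_sub_distrib]
        exact Finset.sum_congr rfl fun i _ => by ring
      rw [hexp] at habel
      linarith
    · intro k hk
      have hk1 : k + 1 ≤ m := hk
      rw [Finset.sum_sub_distrib]
      have ha : ∑ i ∈ univ.filter (fun i : Fin m => (i:ℕ) < k+1), z (ρz i) ≤ topSum (k+1) z := by
        have himg : ∑ i ∈ univ.filter (fun i : Fin m => (i:ℕ) < k+1), z (ρz i)
            = ∑ j ∈ (univ.filter (fun i : Fin m => (i:ℕ) < k+1)).image ρz, z j := by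
          rw [Finset.sum_image (fun a _ b _ hab => ρz.injective hab)]
        rw [himg]
        apply le_topSum
        rw [Finset.card_image_of_injective _ ρz.injective, card_filter_lt hk1]
      have hb : topSum (k+1) y ≤ ∑ i ∈ univ.filter (fun i : Fin m => (i:ℕ) < k+1), y (ρy i) := by
        apply topSum_le hk1
        intro S hS
        have himg : ∑ i ∈ S, y i = ∑ i ∈ S.image ρy.symm, y (ρy i) := by
          rw [Finset.sum_image (fun a _ b _ hab => ρy.symm.injective hab)]
          exact Finset.sum_congr rfl fun i _ => by rw [Equiv.apply_symm_apply]
        rw [himg]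
        have hcard : (S.image ρy.symm).card = k + 1 := by
          rw [Finset.card_image_of_injective _ ρy.symm.injective, hS]
        have := sum_subset_le_sorted (fun i => y (ρy i)) hy' (S.image ρy.symm)
        rwa [hcard] at this
      linarith [hts (k+1)]
    · rw [Finset.sum_sub_distrib, Equiv.sum_comp ρz z, Equiv.sum_comp ρy y, hsum, sub_self]
  have h4 : ∑ i, c (τ i) * y (ρy i) = ∑ j, c j * y ((τ.symm.trans ρy) j) := by
    have := Equiv.sum_comp τ (fun j => c j * y ((τ.symm.trans ρy) j))
    rw [← this]
    apply Finset.sum_congr rfl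
    intro i _
    simp only [Equiv.trans_apply, Equiv.symm_apply_apply]
  linarith

lemma mem_hull (y z : Fin m → ℝ) (hsum : ∑ i, z i = ∑ i, y i)
    (hts : ∀ k, topSum k z ≤ topSum k y) :
    z ∈ convexHull ℝ (Set.range fun σ : Equiv.Perm (Fin m) => y ∘ σ) := by
  by_contra hz
  have hC : IsClosed (convexHull ℝ (Set.range fun σ : Equiv.Perm (Fin m) => y ∘ σ)) :=
    ((Set.finite_range _).isCompact_convexHull ℝ).isClosed
  obtain ⟨f, u, hfa, hfz⟩ :=
    geometric_hahn_banach_closed_point (convex_convexHull ℝ _) hC hz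
  set c : Fin m → ℝ := fun i => f (fun j => if i = j then (1:ℝ) else 0) with hc
  have hf : ∀ w : Fin m → ℝ, f w = ∑ i, w i * c i := by
    intro w
    conv_lhs => rw [pi_eq_sum_univ w]
    rw [map_sum]
    apply Finset.sum_congr rfl
    intro i _
    rw [_root_.map_smul]
    simp [hc, smul_eq_mul]
  obtain ⟨σ, hσ⟩ := key_ineq y z hsum hts c
  have h1 : f z ≤ f (y ∘ σ) := by
    rw [hf z, hf (y ∘ σ)]
    calc ∑ i, z i * c i = ∑ i, c i * z i := Finset.sum_congr rfl fun i _ => mul_comm _ _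
      _ ≤ ∑ i, c i * y (σ i) := hσ
      _ = ∑ i, (y ∘ σ) i * c i := Finset.sum_congr rfl fun i _ => mul_comm _ _
  have h2 : f (y ∘ σ) < u :=
    hfa _ (subset_convexHull ℝ _ ⟨σ, rfl⟩)
  linarith

end Stmt15Aux

theorem stmt15 (n : ℕ) :
    (∀ (e : Equiv.Perm (Fin (n + 1))) (y : Fin (n + 1) → ℝ), expDD (y ∘ e) = expDD y) ∧
    ConvexOn ℝ Set.univ (fun y : Fin (n + 1) → ℝ => (n.factorial : ℝ) * expDD y) ∧
    (∀ y z : Fin (n + 1) → ℝ, (∑ i, z i = ∑ i, y i) →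
      (∀ k, topSum k z ≤ topSum k y) →
      (n.factorial : ℝ) * expDD z ≤ (n.factorial : ℝ) * expDD y) := by
  have hsym : ∀ (e : Equiv.Perm (Fin (n + 1))) (y : Fin (n + 1) → ℝ),
      expDD (y ∘ e) = expDD y := by
    intro e y
    rw [Stmt15Aux.expDD_eq_B, Stmt15Aux.expDD_eq_B, Stmt15Aux.B_perm e y]
  refine ⟨hsym, Stmt15Aux.expDD_convexOn, ?_⟩
  intro y z hsum hts
  have hmem := Stmt15Aux.mem_hull y z hsum hts
  obtain ⟨w, ⟨σ, rfl⟩, hle⟩ :=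
    (Stmt15Aux.expDD_convexOn (n := n)).exists_ge_of_mem_convexHull (Set.subset_univ _) hmem
  calc (n.factorial : ℝ) * expDD z ≤ (n.factorial : ℝ) * expDD (y ∘ σ) := hle
    _ = (n.factorial : ℝ) * expDD y := by rw [hsym σ y]
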